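/- arXiv:2602.17982 — 6 statements merged into one kernel-verified Lean document; each statement's English description precedes it below -/
import Mathlib

section
/- Let Λ be a finite simple graph, let A, B be sets of vertices, and let Φ₁, Φ₂ ∈ Mincut_Λ(A,B). Then the following are equivalent: (1) Φ₁^A ⊆ Φ₂^A; (2) Φ₂^B ⊆ Φ₁^B; (3) Φ₁ separates Φ₂ from A; (4) Φ₂ separates Φ₁ from B. -/
universe u

/-- `C` separates `A` from `B` in the graph `G`: every vertex of `A \ C` and every vertex of
`B \ C` lie in different connected components of the subgraph induced on the complement of `C`. -/
def Separates {V : Type u} (G : SimpleGraph V) (A B C : Set V) : Prop :=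
  ∀ x (hx : x ∈ A \ C) y (hy : y ∈ B \ C),
    ¬ (G.induce Cᶜ).Reachable ⟨x, hx.2⟩ ⟨y, hy.2⟩

/-- `C` is a minimal cut between `A` and `B`: it separates `A` from `B` and no proper subset
of `C` does. -/
def IsMincutBetween {V : Type u} (G : SimpleGraph V) (A B C : Set V) : Prop :=
  Separates G A B C ∧ ∀ C' ⊆ C, C' ≠ C → ¬ Separates G A B C'

/-- The collection of all minimal cuts between `A` and `B` in `G`. -/
def Mincut {V : Type u} (G : SimpleGraph V) (A B : Set V) : Set (Set V) :=
  {C | IsMincutBetween G A B C}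

/-- `Φ^A`: the union of those connected components of the induced subgraph on the complement of
`Φ` that contain at least one vertex of `A \ Φ`. -/
def sideOf {V : Type u} (G : SimpleGraph V) (A Φ : Set V) : Set V :=
  {v | ∃ (hv : v ∉ Φ), ∃ x, ∃ (hx : x ∈ A \ Φ),
    (G.induce Φᶜ).Reachable ⟨v, hv⟩ ⟨x, hx.2⟩}

namespace MincutAux

variable {V : Type u} {G : SimpleGraph V}

/-- Reachability in `G` avoiding the set `s`. -/
def Reach (G : SimpleGraph V) (s : Set V) (x y : V) : Prop :=
  ∃ w : G.Walk x y, ∀ v ∈ w.support, v ∉ s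

lemma reach_of_reachable {s : Set V} {x y : V} (hx : x ∉ s) (hy : y ∉ s)
    (h : (G.induce sᶜ).Reachable ⟨x, hx⟩ ⟨y, hy⟩) : Reach G s x y := by
  obtain ⟨p⟩ := h
  refine ⟨p.map (SimpleGraph.Embedding.induce sᶜ).toHom, ?_⟩
  intro v hv
  replace hv : v ∈ (p.map (SimpleGraph.Embedding.induce sᶜ).toHom).support := hv
  rw [SimpleGraph.Walk.support_map] at hv
  obtain ⟨u, _, rfl⟩ := List.mem_map.mp hv
  exact u.2

lemma reachable_of_walk {s : Set V} : ∀ {x y : V} (w : G.Walk x y)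
    (hw : ∀ v ∈ w.support, v ∉ s) (hx : x ∉ s) (hy : y ∉ s),
    (G.induce sᶜ).Reachable ⟨x, hx⟩ ⟨y, hy⟩ := by
  intro x y w
  induction w with
  | nil => intro _ _ _; rfl
  | @cons a b c h p ih =>
    intro hw ha hc
    have hb : b ∉ s := hw b (by simp)
    exact (SimpleGraph.Reachable.trans
      (SimpleGraph.Adj.reachable (by exact h : (G.induce sᶜ).Adj ⟨a, ha⟩ ⟨b, hb⟩))
      (ih (fun v hv => hw v (by simp [hv])) hb hc))

lemma reach_iff {s : Set V} {x y : V} (hx : x ∉ s) (hy : y ∉ s) :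
    (G.induce sᶜ).Reachable ⟨x, hx⟩ ⟨y, hy⟩ ↔ Reach G s x y :=
  ⟨reach_of_reachable hx hy, fun ⟨w, hw⟩ => reachable_of_walk w hw hx hy⟩

lemma Reach.symm {s : Set V} {x y : V} (h : Reach G s x y) : Reach G s y x := by
  obtain ⟨w, hw⟩ := h
  exact ⟨w.reverse, fun v hv => hw v (by simpa using hv)⟩

lemma Reach.trans {s : Set V} {x y z : V} (h : Reach G s x y) (h' : Reach G s y z) :
    Reach G s x z := by
  obtain ⟨w, hw⟩ := h
  obtain ⟨w', hw'⟩ := h'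
  refine ⟨w.append w', fun v hv => ?_⟩
  rcases (SimpleGraph.Walk.mem_support_append_iff w w').mp hv with h | h
  exacts [hw v h, hw' v h]

lemma Reach.notMem_left {s : Set V} {x y : V} (h : Reach G s x y) : x ∉ s := by
  obtain ⟨w, hw⟩ := h; exact hw x w.start_mem_support

lemma Reach.notMem_right {s : Set V} {x y : V} (h : Reach G s x y) : y ∉ s := by
  obtain ⟨w, hw⟩ := h; exact hw y w.end_mem_support

lemma separates_iff {A B C : Set V} :
    Separates G A B C ↔ ∀ x ∈ A, ∀ y ∈ B, ¬ Reach G C x y := by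
  constructor
  · intro h x hxA y hyB ⟨w, hw⟩
    have hx : x ∉ C := hw x w.start_mem_support
    have hy : y ∉ C := hw y w.end_mem_support
    exact h x ⟨hxA, hx⟩ y ⟨hyB, hy⟩ (reachable_of_walk w hw hx hy)
  · intro h x hx y hy hr
    exact h x hx.1 y hy.1 (reach_of_reachable hx.2 hy.2 hr)

lemma mem_sideOf {A Φ : Set V} {v : V} :
    v ∈ sideOf G A Φ ↔ ∃ a ∈ A, Reach G Φ v a := by
  constructor
  · rintro ⟨hv, a, ha, hr⟩
    exact ⟨a, ha.1, reach_of_reachable hv ha.2 hr⟩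
  · rintro ⟨a, haA, hr⟩
    have hv := hr.notMem_left
    have ha := hr.notMem_right
    exact ⟨hv, a, ⟨haA, ha⟩, (reach_iff hv ha).mpr hr⟩

lemma separates_comm {A B C : Set V} (h : Separates G A B C) : Separates G B A C := by
  rw [separates_iff] at h ⊢
  exact fun x hx y hy hr => h y hy x hx hr.symm

lemma mincut_comm {A B C : Set V} (h : C ∈ Mincut G A B) : C ∈ Mincut G B A := by
  obtain ⟨hs, hm⟩ := h
  exact ⟨separates_comm hs, fun C' hsub hne hsep => hm C' hsub hne (separates_comm hsep)⟩

/-- (1) ↔ (3), needing no hypotheses. -/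
lemma side_subset_iff {A : Set V} {Φ₁ Φ₂ : Set V} :
    sideOf G A Φ₁ ⊆ sideOf G A Φ₂ ↔ Separates G Φ₂ A Φ₁ := by
  classical
  constructor
  · intro hsub
    rw [separates_iff]
    rintro x hx a ha hr
    obtain ⟨b, _, hr'⟩ := mem_sideOf.mp (hsub (mem_sideOf.mpr ⟨a, ha, hr⟩))
    exact hr'.notMem_left hx
  · intro hsep v hv
    rw [separates_iff] at hsep
    obtain ⟨a, haA, w, hw⟩ := mem_sideOf.mp hv
    have hΦ₂ : ∀ u ∈ w.support, u ∉ Φ₂ := by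
      intro u hu huΦ₂
      exact hsep u huΦ₂ a haA ⟨w.dropUntil u hu,
        fun v hv => hw v (SimpleGraph.Walk.support_dropUntil_subset w hu hv)⟩
    exact mem_sideOf.mpr ⟨a, haA, w, hΦ₂⟩

/-- Key: if `x` appears exactly once in the support (as endpoint), prefixes to other
vertices avoid `x`. -/
lemma notMem_takeUntil [DecidableEq V] {x : V} {a : V} (w : G.Walk a x)
    (hcount : w.support.count x = 1) {v : V} (hv : v ∈ w.support) (hvx : v ≠ x) :
    x ∉ (w.takeUntil v hv).support := by
  intro hmem
  have hspec := SimpleGraph.Walk.take_spec w hv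
  have : w.support = (w.takeUntil v hv).support ++ (w.dropUntil v hv).support.tail := by
    rw [← SimpleGraph.Walk.support_append, hspec]
  rw [this, List.count_append] at hcount
  have h1 : 1 ≤ (w.takeUntil v hv).support.count x := List.count_pos_iff.mpr hmem
  have h2 : 1 ≤ (w.dropUntil v hv).support.tail.count x := by
    apply List.count_pos_iff.mpr
    have hx : x ∈ (w.dropUntil v hv).support := SimpleGraph.Walk.end_mem_support _
    rw [SimpleGraph.Walk.support_eq_cons] at hx
    rcases List.mem_cons.mp hx with h | h
    · exact absurd h.symm hvx
    · exact h
  omega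

/-- (3) → (4), using minimality. -/
lemma sep_of_sep {A B Φ₁ Φ₂ : Set V} (h₁ : Φ₁ ∈ Mincut G A B) (h₂ : Φ₂ ∈ Mincut G A B)
    (h : Separates G Φ₂ A Φ₁) : Separates G Φ₁ B Φ₂ := by
  classical
  rw [separates_iff] at h ⊢
  rintro x hxΦ₁ y hyB Q
  have hxΦ₂ : x ∉ Φ₂ := Q.notMem_left
  have hyΦ₂ : y ∉ Φ₂ := Q.notMem_right
  -- Φ₁ \ {x} is not a cut
  have hne : Φ₁ \ {x} ≠ Φ₁ := by
    intro he
    have : x ∉ Φ₁ \ {x} := by simp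
    rw [he] at this; exact this hxΦ₁
  have hnsep := h₁.2 (Φ₁ \ {x}) Set.diff_subset hne
  rw [separates_iff] at hnsep
  push_neg at hnsep
  obtain ⟨a, haA, b, hbB, w0, hw0⟩ := hnsep
  -- every vertex of w0 in Φ₁ equals x
  have hw0' : ∀ v ∈ w0.support, v ∈ Φ₁ → v = x := by
    intro v hv hvΦ₁
    by_contra hvx
    exact hw0 v hv ⟨hvΦ₁, hvx⟩
  by_cases hxw : x ∈ w0.support
  · -- take w0 up to the first occurrence of x
    set w₁ := w0.takeUntil x hxw with hw₁def
    have hcount : w₁.support.count x = 1 := SimpleGraph.Walk.count_support_takeUntil_eq_one w0 hxw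
    have hsub : ∀ v ∈ w₁.support, v ∈ w0.support :=
      fun v hv => SimpleGraph.Walk.support_takeUntil_subset w0 hxw hv
    -- all vertices of w₁ avoid Φ₂
    have hΦ₂ : ∀ v ∈ w₁.support, v ∉ Φ₂ := by
      intro v hv hvΦ₂
      have hvx : v ≠ x := fun he => hxΦ₂ (he ▸ hvΦ₂)
      have hvΦ₁ : v ∉ Φ₁ := fun hc => hvx (hw0' v (hsub v hv) hc)
      -- walk from a to v avoiding Φ₁
      have hxnot : x ∉ (w₁.takeUntil v hv).support := notMem_takeUntil w₁ hcount hv hvx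
      have hreach : Reach G Φ₁ v a := by
        refine Reach.symm ⟨w₁.takeUntil v hv, fun u hu huΦ₁ => ?_⟩
        have hux : u = x := hw0' u (hsub u (SimpleGraph.Walk.support_takeUntil_subset w₁ hv hu)) huΦ₁
        exact hxnot (hux ▸ hu)
      exact h v hvΦ₂ a haA hreach
    -- w₁ : walk a → x avoids Φ₂, concatenate with Q
    obtain ⟨q, hq⟩ := Q
    have : Reach G Φ₂ a y := Reach.trans ⟨w₁, hΦ₂⟩ ⟨q, hq⟩
    have hsep₂ := h₂.1
    rw [separates_iff] at hsep₂
    exact hsep₂ a haA y hyB this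
  · -- w0 avoids Φ₁ entirely: contradicts Φ₁ being a cut
    have : Reach G Φ₁ a b := by
      refine ⟨w0, fun v hv hvΦ₁ => hxw ?_⟩
      have := hw0' v hv hvΦ₁
      exact this ▸ hv
    have hsep₁ := h₁.1
    rw [separates_iff] at hsep₁
    exact hsep₁ a haA b hbB this

end MincutAux

/-- Lemma `lem:comparable`. For two minimal cuts `Φ₁, Φ₂` between `A` and `B`,
the following are equivalent: (1) `Φ₁^A ⊆ Φ₂^A`; (2) `Φ₂^B ⊆ Φ₁^B`; (3) `Φ₁` separates `Φ₂`
from `A`; (4) `Φ₂` separates `Φ₁` from `B`. -/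
theorem mincut_comparable_tfae {V : Type u} [Fintype V] (G : SimpleGraph V)
    (A B Φ₁ Φ₂ : Set V) (h₁ : Φ₁ ∈ Mincut G A B) (h₂ : Φ₂ ∈ Mincut G A B) :
    List.TFAE [sideOf G A Φ₁ ⊆ sideOf G A Φ₂,
      sideOf G B Φ₂ ⊆ sideOf G B Φ₁,
      Separates G Φ₂ A Φ₁,
      Separates G Φ₁ B Φ₂] := by
  have h13 : (sideOf G A Φ₁ ⊆ sideOf G A Φ₂) ↔ Separates G Φ₂ A Φ₁ :=
    MincutAux.side_subset_iff
  have h24 : (sideOf G B Φ₂ ⊆ sideOf G B Φ₁) ↔ Separates G Φ₁ B Φ₂ :=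
    MincutAux.side_subset_iff
  have h34 : Separates G Φ₂ A Φ₁ → Separates G Φ₁ B Φ₂ :=
    MincutAux.sep_of_sep h₁ h₂
  have h43 : Separates G Φ₁ B Φ₂ → Separates G Φ₂ A Φ₁ :=
    MincutAux.sep_of_sep (MincutAux.mincut_comm h₂) (MincutAux.mincut_comm h₁)
  tfae_have 1 ↔ 3 := h13
  tfae_have 2 ↔ 4 := h24
  tfae_have 3 → 4 := h34
  tfae_have 4 → 3 := h43
  tfae_finish
end

section
/- Let Λ be a finite simple graph, let A, B be sets of vertices, and let Φ₁, Φ₂ ∈ Mincut_Λ(A,B) satisfy Φ₁^A ⊆ Φ₂^A. Set Φ'₁ = Φ₁ ∩ Φ₂^A. Then: (1) Φ₁ ⊆ Φ₂^A ∪ Φ₂; (2) Φ₁ = Φ'₁ ∪ { v ∈ Φ₂ : there is a (possibly constant) walk in Λ from v to a vertex of A whose vertices all lie in (Φ₂^A ∪ Φ₂)∖Φ'₁ and which meets Φ₂ only at its starting vertex v }; (3) Φ₁^A = { w ∈ Φ₂^A : there is a (possibly constant) walk in Λ from w to a vertex of A whose vertices all lie in Φ₂^A∖Φ'₁ }. 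-/
universe u

namespace MincutAux

variable {V : Type u} (G : SimpleGraph V)

lemma reachable_induce_of_walk {s : Set V} :
    ∀ {u v : V} (w : G.Walk u v), (∀ c ∈ w.support, c ∈ s) →
      ∀ (hu : u ∈ s) (hv : v ∈ s), (G.induce s).Reachable ⟨u, hu⟩ ⟨v, hv⟩ := by
  intro u v w
  induction w with
  | nil => intro _ hu hv; exact SimpleGraph.Reachable.refl _
  | @cons u x v h p ih =>
    intro hw hu hv
    have hx : x ∈ s := hw x (by simp)
    refine (SimpleGraph.Adj.reachable ?_).trans (ih (fun c hc => hw c (by simp [hc])) hx hv)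
    exact h

lemma walk_of_reachable_induce {s : Set V} {u v : V} (hu : u ∈ s) (hv : v ∈ s)
    (h : (G.induce s).Reachable ⟨u, hu⟩ ⟨v, hv⟩) :
    ∃ w : G.Walk u v, ∀ c ∈ w.support, c ∈ s := by
  obtain ⟨p⟩ := h
  refine ⟨p.map (SimpleGraph.Embedding.induce s).toHom, ?_⟩
  intro c hc
  erw [SimpleGraph.Walk.support_map] at hc
  obtain ⟨⟨c', hc'⟩, -, rfl⟩ := List.mem_map.1 hc
  exact hc'

lemma mem_sideOf_iff {A Φ : Set V} {v : V} :
    v ∈ sideOf G A Φ ↔ v ∉ Φ ∧ ∃ a, a ∈ A ∧ ∃ w : G.Walk v a, ∀ c ∈ w.support, c ∉ Φ := by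
  constructor
  · rintro ⟨hv, x, hx, hr⟩
    obtain ⟨w, hw⟩ := walk_of_reachable_induce G (s := Φᶜ) hv hx.2 hr
    exact ⟨hv, x, hx.1, w, hw⟩
  · rintro ⟨hv, a, ha, w, hw⟩
    have haΦ : a ∉ Φ := hw a w.end_mem_support
    exact ⟨hv, a, ⟨ha, haΦ⟩, reachable_induce_of_walk G w hw hv haΦ⟩

lemma mem_sideOf_of_walk {A Φ : Set V} {v a : V} (ha : a ∈ A) (w : G.Walk v a)
    (hsup : ∀ c ∈ w.support, c ∉ Φ) : ∀ c ∈ w.support, c ∈ sideOf G A Φ := by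
  classical
  intro c hc
  refine (mem_sideOf_iff G).2 ⟨hsup c hc, a, ha, w.dropUntil c hc, ?_⟩
  exact fun d hd => hsup d (SimpleGraph.Walk.support_dropUntil_subset w hc hd)

lemma tail_mem_sideOf {A Φ : Set V} {v a : V} (ha : a ∈ A) (w : G.Walk v a)
    (htail : ∀ c ∈ w.support.tail, c ∉ Φ) : ∀ c ∈ w.support.tail, c ∈ sideOf G A Φ := by
  cases w with
  | nil => intro c hc; simp at hc
  | @cons u x b h p =>
    have hts : (SimpleGraph.Walk.cons h p).support.tail = p.support := by
      simp [SimpleGraph.Walk.support_cons]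
    rw [hts] at htail ⊢
    exact mem_sideOf_of_walk G ha p htail

lemma exists_walk_of_mem_mincut {A B Φ : Set V} (h : IsMincutBetween G A B Φ)
    {v : V} (hv : v ∈ Φ) :
    ∃ a ∈ A, ∃ w : G.Walk v a, ∀ c ∈ w.support.tail, c ∉ Φ := by
  classical
  have hne : Φ \ {v} ≠ Φ := by
    intro heq
    have : v ∈ Φ \ {v} := heq.symm ▸ hv
    simp at this
  have hns : ¬ Separates G A B (Φ \ {v}) := h.2 _ Set.diff_subset hne
  simp only [Separates, not_forall, not_not] at hns
  obtain ⟨x, hx, y, hy, hr⟩ := hns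
  obtain ⟨w₀, hw₀⟩ := walk_of_reachable_induce G (s := (Φ \ {v})ᶜ) hx.2 hy.2 hr
  have hw₀' : ∀ c ∈ w₀.support, c ∈ Φ → c = v := by
    intro c hc hcΦ
    have := hw₀ c hc
    simp only [Set.mem_compl_iff, Set.mem_diff, Set.mem_singleton_iff, not_and, not_not] at this
    exact this hcΦ
  by_cases hvmem : v ∈ w₀.support
  · set p := w₀.takeUntil v hvmem with hp
    refine ⟨x, hx.1, p.reverse, ?_⟩
    have hcount : List.count v p.reverse.support = 1 := by
      rw [SimpleGraph.Walk.support_reverse, List.count_reverse]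
      exact SimpleGraph.Walk.count_support_takeUntil_eq_one w₀ hvmem
    have hcons : p.reverse.support = v :: p.reverse.support.tail :=
      SimpleGraph.Walk.support_eq_cons _
    have hvtail : v ∉ p.reverse.support.tail := by
      rw [hcons, List.count_cons_self] at hcount
      exact List.count_eq_zero.1 (by omega)
    intro c hc hcΦ
    have hcmem : c ∈ p.support := by
      have : c ∈ p.reverse.support := List.mem_of_mem_tail hc
      rwa [SimpleGraph.Walk.support_reverse, List.mem_reverse] at this
    have := hw₀' c (SimpleGraph.Walk.support_takeUntil_subset w₀ hvmem hcmem) hcΦ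
    exact hvtail (this ▸ hc)
  · exfalso
    have hall : ∀ c ∈ w₀.support, c ∉ Φ := by
      intro c hc hcΦ
      exact hvmem ((hw₀' c hc hcΦ) ▸ hc)
    have hxΦ : x ∉ Φ := hall x w₀.start_mem_support
    have hyΦ : y ∉ Φ := hall y w₀.end_mem_support
    exact h.1 x ⟨hx.1, hxΦ⟩ y ⟨hy.1, hyΦ⟩ (reachable_induce_of_walk G w₀ hall hxΦ hyΦ)

end MincutAux

/-- Lemma `lem:comparable1`. Suppose `Φ₁, Φ₂ ∈ Mincut(A,B)` with
`Φ₁^A ⊆ Φ₂^A`, and set `Φ'₁ = Φ₁ ∩ Φ₂^A`. Then (1) `Φ₁ ⊆ Φ₂^A ∪ Φ₂`; (2) `Φ₁` equals `Φ'₁`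
together with the vertices of `Φ₂` joined to `A` by a walk in `(Φ₂^A ∪ Φ₂) ∖ Φ'₁` meeting `Φ₂`
only at its start; (3) `Φ₁^A` consists of the vertices of `Φ₂^A` joined to `A` by a walk in
`Φ₂^A ∖ Φ'₁`. -/
theorem mincut_comparable_description {V : Type u} [Fintype V] (G : SimpleGraph V)
    (A B Φ₁ Φ₂ : Set V) (h₁ : Φ₁ ∈ Mincut G A B) (h₂ : Φ₂ ∈ Mincut G A B)
    (hle : sideOf G A Φ₁ ⊆ sideOf G A Φ₂) :
    Φ₁ ⊆ sideOf G A Φ₂ ∪ Φ₂ ∧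
    Φ₁ = (Φ₁ ∩ sideOf G A Φ₂) ∪
      {v | v ∈ Φ₂ ∧ ∃ a ∈ A, ∃ w : G.Walk v a,
        (∀ c ∈ w.support, c ∈ (sideOf G A Φ₂ ∪ Φ₂) \ (Φ₁ ∩ sideOf G A Φ₂)) ∧
        (∀ c ∈ w.support, c ∈ Φ₂ → c = v)} ∧
    sideOf G A Φ₁ = {v | v ∈ sideOf G A Φ₂ ∧ ∃ a ∈ A, ∃ w : G.Walk v a,
        ∀ c ∈ w.support, c ∈ sideOf G A Φ₂ \ (Φ₁ ∩ sideOf G A Φ₂)} := by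
  classical
  have hS₂Φ₂ : ∀ v, v ∈ sideOf G A Φ₂ → v ∉ Φ₂ := fun v hv =>
    ((MincutAux.mem_sideOf_iff G).1 hv).1
  -- Main claim combining parts 1 and 2 (forward direction)
  have key : ∀ v ∈ Φ₁, v ∈ sideOf G A Φ₂ ∨
      (v ∈ Φ₂ ∧ ∃ a ∈ A, ∃ w : G.Walk v a,
        (∀ c ∈ w.support, c ∈ (sideOf G A Φ₂ ∪ Φ₂) \ (Φ₁ ∩ sideOf G A Φ₂)) ∧
        (∀ c ∈ w.support, c ∈ Φ₂ → c = v)) := by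
    intro v hv
    by_cases hvS : v ∈ sideOf G A Φ₂
    · exact Or.inl hvS
    right
    obtain ⟨a, ha, w, hw⟩ := MincutAux.exists_walk_of_mem_mincut G h₁ hv
    have htailS : ∀ c ∈ w.support.tail, c ∈ sideOf G A Φ₂ := fun c hc =>
      hle (MincutAux.tail_mem_sideOf G ha w hw c hc)
    have hmemcases : ∀ c ∈ w.support, c = v ∨ c ∈ w.support.tail := by
      intro c hc
      rw [SimpleGraph.Walk.support_eq_cons] at hc
      exact List.mem_cons.1 hc
    have hvΦ₂ : v ∈ Φ₂ := by
      by_contra hvΦ₂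
      apply hvS
      refine (MincutAux.mem_sideOf_iff G).2 ⟨hvΦ₂, a, ha, w, ?_⟩
      intro c hc
      rcases hmemcases c hc with rfl | hc'
      · exact hvΦ₂
      · exact hS₂Φ₂ c (htailS c hc')
    refine ⟨hvΦ₂, a, ha, w, ?_, ?_⟩
    · intro c hc
      rcases hmemcases c hc with rfl | hc'
      · exact ⟨Or.inr hvΦ₂, fun hmem => hvS hmem.2⟩
      · exact ⟨Or.inl (htailS c hc'), fun hmem => hw c hc' hmem.1⟩
    · intro c hc hcΦ₂
      rcases hmemcases c hc with rfl | hc'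
      · rfl
      · exact absurd hcΦ₂ (hS₂Φ₂ c (htailS c hc'))
  refine ⟨?_, ?_, ?_⟩
  · -- Part 1
    intro v hv
    rcases key v hv with h | h
    · exact Or.inl h
    · exact Or.inr h.1
  · -- Part 2
    ext v
    constructor
    · intro hv
      by_cases hvS : v ∈ sideOf G A Φ₂
      · exact Or.inl ⟨hv, hvS⟩
      · rcases key v hv with h | h
        · exact absurd h hvS
        · exact Or.inr h
    · rintro (h | ⟨hvΦ₂, a, ha, w, hi, hii⟩)
      · exact h.1
      by_contra hv₁
      have hsupn : ∀ c ∈ w.support, c ∉ Φ₁ := by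
        intro c hc hcΦ₁
        rcases (hi c hc).1 with hcS | hcΦ₂
        · exact (hi c hc).2 ⟨hcΦ₁, hcS⟩
        · exact hv₁ (hii c hc hcΦ₂ ▸ hcΦ₁)
      have hvS₁ : v ∈ sideOf G A Φ₁ :=
        (MincutAux.mem_sideOf_iff G).2 ⟨hsupn v w.start_mem_support, a, ha, w, hsupn⟩
      exact hS₂Φ₂ v (hle hvS₁) hvΦ₂
  · -- Part 3
    ext v
    constructor
    · intro hv
      obtain ⟨hvΦ₁, a, ha, w, hsup⟩ := (MincutAux.mem_sideOf_iff G).1 hv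
      refine ⟨hle hv, a, ha, w, fun c hc => ?_⟩
      exact ⟨hle (MincutAux.mem_sideOf_of_walk G ha w hsup c hc),
        fun hmem => hsup c hc hmem.1⟩
    · rintro ⟨hvS₂, a, ha, w, hsup⟩
      have hsupn : ∀ c ∈ w.support, c ∉ Φ₁ := fun c hc hcΦ₁ =>
        (hsup c hc).2 ⟨hcΦ₁, (hsup c hc).1⟩
      exact (MincutAux.mem_sideOf_iff G).2
        ⟨hsupn v w.start_mem_support, a, ha, w, hsupn⟩
end

section
/- Let Λ be a finite simple graph and let A, B be sets of vertices. Then the relation ≤ on Mincut_Λ(A,B) is a partial order, and (Mincut_Λ(A,B), ≤) is a lattice: any Φ₁, Φ₂ ∈ Mincut_Λ(A,B) have a join (least upper bound) and a meet (greatest lower bound) in Mincut_Λ(A,B). Moreover, both the join and the meet of Φ₁ and Φ₂ are contained in Φ₁ ∪ Φ₂. -/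
universe u

namespace MincutLattice

variable {V : Type u} {G : SimpleGraph V}

/-- Reachability between `u` and `v` avoiding the set `Φ`. -/
def Reach (G : SimpleGraph V) (Φ : Set V) (u v : V) : Prop :=
  ∃ (hu : u ∉ Φ) (hv : v ∉ Φ), (G.induce Φᶜ).Reachable ⟨u, hu⟩ ⟨v, hv⟩

lemma Reach.left {Φ : Set V} {u v : V} (h : Reach G Φ u v) : u ∉ Φ := by
  obtain ⟨h, -, -⟩ := h; exact h

lemma Reach.right {Φ : Set V} {u v : V} (h : Reach G Φ u v) : v ∉ Φ := by
  obtain ⟨-, h, -⟩ := h; exact h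

lemma Reach.refl {Φ : Set V} {u : V} (h : u ∉ Φ) : Reach G Φ u u :=
  ⟨h, h, SimpleGraph.Reachable.refl _⟩

lemma Reach.symm {Φ : Set V} {u v : V} (h : Reach G Φ u v) : Reach G Φ v u := by
  obtain ⟨a, b, c⟩ := h; exact ⟨b, a, c.symm⟩

lemma Reach.trans {Φ : Set V} {u v w : V} (h₁ : Reach G Φ u v) (h₂ : Reach G Φ v w) :
    Reach G Φ u w := by
  obtain ⟨a, b, c⟩ := h₁; obtain ⟨b', d, e⟩ := h₂; exact ⟨a, d, c.trans e⟩

lemma Reach.adj {Φ : Set V} {u v : V} (hu : u ∉ Φ) (hv : v ∉ Φ) (h : G.Adj u v) :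
    Reach G Φ u v :=
  ⟨hu, hv, SimpleGraph.Adj.reachable (by exact h : (G.induce Φᶜ).Adj ⟨u, hu⟩ ⟨v, hv⟩)⟩

/-- induction along a walk avoiding `Φ`. -/
lemma Reach.ind {Φ : Set V} {u v : V} (h : Reach G Φ u v) {P : V → Prop}
    (base : P u)
    (step : ∀ x y, P x → x ∉ Φ → y ∉ Φ → G.Adj x y → P y) : P v := by
  obtain ⟨hu, hv, hr⟩ := h
  obtain ⟨p⟩ := hr
  suffices H : ∀ (x y : ↥(Φᶜ)) (_ : (G.induce Φᶜ).Walk x y), P x → P y by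
    exact H _ _ p base
  intro x y p
  induction p with
  | nil => exact id
  | cons h p ih =>
    intro hx
    rename_i a b c
    exact ih (step _ _ hx a.2 b.2 h)


lemma Reach.mono {Φ' Φ : Set V} {u v : V} (hsub : Φ' ⊆ Φ) (h : Reach G Φ u v) :
    Reach G Φ' u v := by
  have hu : u ∉ Φ' := fun hm => h.left (hsub hm)
  refine h.ind (P := fun w => Reach G Φ' u w) (Reach.refl hu) ?_
  intro x y hx _ hy hadj
  exact hx.trans (Reach.adj hx.right (fun hm => hy (hsub hm)) hadj)

lemma mem_sideOf {A Φ : Set V} {v : V} :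
    v ∈ sideOf G A Φ ↔ ∃ a ∈ A, Reach G Φ v a := by
  constructor
  · rintro ⟨hv, x, hx, hr⟩
    exact ⟨x, hx.1, hv, hx.2, hr⟩
  · rintro ⟨a, ha, hv, ha2, hr⟩
    exact ⟨hv, a, ⟨ha, ha2⟩, hr⟩

lemma sideOf_not_mem {A Φ : Set V} {v : V} (h : v ∈ sideOf G A Φ) : v ∉ Φ := by
  obtain ⟨hv, -⟩ := h; exact hv

lemma mem_sideOf_self {A Φ : Set V} {a : V} (ha : a ∈ A) (h : a ∉ Φ) : a ∈ sideOf G A Φ :=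
  mem_sideOf.2 ⟨a, ha, Reach.refl h⟩

lemma sideOf_adj {A Φ : Set V} {v w : V} (hv : v ∉ Φ) (hadj : G.Adj v w)
    (hw : w ∈ sideOf G A Φ) : v ∈ sideOf G A Φ := by
  obtain ⟨a, ha, hr⟩ := mem_sideOf.1 hw
  exact mem_sideOf.2 ⟨a, ha, (Reach.adj hv hr.left hadj).trans hr⟩

lemma sideOf_reach {A Φ : Set V} {v w : V} (hr : Reach G Φ v w)
    (hw : w ∈ sideOf G A Φ) : v ∈ sideOf G A Φ := by
  obtain ⟨a, ha, hr'⟩ := mem_sideOf.1 hw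
  exact mem_sideOf.2 ⟨a, ha, hr.trans hr'⟩

lemma separates_iff {A B C : Set V} :
    Separates G A B C ↔ ∀ x ∈ A, ∀ y ∈ B, ¬ Reach G C x y := by
  constructor
  · rintro h x hx y hy ⟨hxC, hyC, hr⟩
    exact h x ⟨hx, hxC⟩ y ⟨hy, hyC⟩ hr
  · intro h x hx y hy hr
    exact h x hx.1 y hy.1 ⟨hx.2, hy.2, hr⟩

lemma separates_comm {A B C : Set V} (h : Separates G A B C) : Separates G B A C := by
  rw [separates_iff] at h ⊢
  intro x hx y hy hr
  exact h y hy x hx hr.symm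

lemma not_separates_iff {A B C : Set V} :
    ¬ Separates G A B C ↔ ∃ x ∈ A, ∃ y ∈ B, Reach G C x y := by
  rw [separates_iff]; push_neg; rfl

lemma separates_mono {A B C C' : Set V} (hsub : C ⊆ C') (h : Separates G A B C) :
    Separates G A B C' := by
  rw [separates_iff] at h ⊢
  intro x hx y hy hr
  exact h x hx y hy (hr.mono hsub)

lemma isMincutBetween_comm {A B C : Set V} (h : IsMincutBetween G A B C) :
    IsMincutBetween G B A C :=
  ⟨separates_comm h.1, fun C' hs hne hsep => h.2 C' hs hne (separates_comm hsep)⟩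

lemma not_separates_sdiff {A B C : Set V} (h : IsMincutBetween G A B C) {u : V}
    (hu : u ∈ C) : ¬ Separates G A B (C \ {u}) := by
  refine h.2 _ Set.diff_subset (fun he => ?_)
  have : u ∈ C \ {u} := he.symm ▸ hu
  exact this.2 rfl

lemma sideOf_disjoint_of_separates {A B C : Set V} (h : Separates G A B C) {v : V}
    (hA : v ∈ sideOf G A C) (hB : v ∈ sideOf G B C) : False := by
  obtain ⟨a, ha, hra⟩ := mem_sideOf.1 hA
  obtain ⟨b, hb, hrb⟩ := mem_sideOf.1 hB
  exact separates_iff.1 h a ha b hb (hra.symm.trans hrb)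

/-- The boundary lemma: every vertex of a minimal cut is in `A` or adjacent to the `A`-side. -/
lemma mincut_boundary {A B Φ : Set V} (h : IsMincutBetween G A B Φ) {u : V} (hu : u ∈ Φ) :
    u ∈ A ∨ ∃ w, G.Adj u w ∧ w ∈ sideOf G A Φ := by
  by_contra hcon
  push_neg at hcon
  obtain ⟨huA, hnb⟩ := hcon
  obtain ⟨x, hx, y, hy, hr⟩ := not_separates_iff.1 (not_separates_sdiff h hu)
  -- x ≠ u since u ∉ A
  have hxu : x ≠ u := fun he => huA (he ▸ hx)
  have hxΦ : x ∉ Φ := fun hm => hr.left ⟨hm, hxu⟩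
  have hyside : y ∈ sideOf G A Φ := by
    refine hr.ind (P := fun w => w ∈ sideOf G A Φ) (mem_sideOf_self hx hxΦ) ?_
    intro p q hp _ hq hadj
    by_cases hqu : q = u
    · subst hqu; exact absurd hp (hnb p hadj.symm)
    · exact sideOf_adj (fun hm => hq ⟨hm, hqu⟩) hadj.symm hp
  exact sideOf_disjoint_of_separates h.1 hyside (mem_sideOf_self hy (sideOf_not_mem hyside))

lemma antisymm_aux {A B Φ₁ Φ₂ : Set V} (h₁ : IsMincutBetween G A B Φ₁)
    (h₁₂ : sideOf G A Φ₁ ⊆ sideOf G A Φ₂) (h₂₁ : sideOf G A Φ₂ ⊆ sideOf G A Φ₁) :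
    Φ₁ ⊆ Φ₂ := by
  intro v hv
  by_contra hv2
  have : v ∈ sideOf G A Φ₁ := by
    rcases mincut_boundary h₁ hv with hvA | ⟨w, hadj, hw⟩
    · exact h₂₁ (mem_sideOf_self hvA hv2)
    · exact h₂₁ (sideOf_adj hv2 hadj (h₁₂ hw))
  exact sideOf_not_mem this hv

lemma mincut_antisymm {A B Φ₁ Φ₂ : Set V} (h₁ : IsMincutBetween G A B Φ₁)
    (h₂ : IsMincutBetween G A B Φ₂)
    (h₁₂ : sideOf G A Φ₁ ⊆ sideOf G A Φ₂) (h₂₁ : sideOf G A Φ₂ ⊆ sideOf G A Φ₁) :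
    Φ₁ = Φ₂ :=
  Set.Subset.antisymm (antisymm_aux h₁ h₁₂ h₂₁) (antisymm_aux h₂ h₂₁ h₁₂)

lemma exists_mincut_subset [Fintype V] {A B C : Set V} (h : Separates G A B C) :
    ∃ C', C' ⊆ C ∧ IsMincutBetween G A B C' := by
  obtain ⟨n, hn⟩ : ∃ n, C.ncard ≤ n := ⟨C.ncard, le_rfl⟩
  induction n generalizing C with
  | zero =>
    refine ⟨C, subset_rfl, h, fun C' hs hne hsep => hne ?_⟩
    have hC : C = ∅ := Set.ncard_eq_zero (Set.toFinite C) |>.1 (Nat.le_zero.1 hn)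
    exact Set.Subset.antisymm hs (hC ▸ Set.empty_subset _)
  | succ m ih =>
    by_cases hmin : ∀ C' ⊆ C, C' ≠ C → ¬ Separates G A B C'
    · exact ⟨C, subset_rfl, h, hmin⟩
    · push_neg at hmin
      obtain ⟨C', hs, hne, hsep⟩ := hmin
      have hlt : C'.ncard < C.ncard :=
        Set.ncard_lt_ncard (Set.ssubset_iff_subset_ne.2 ⟨hs, hne⟩) (Set.toFinite C)
      obtain ⟨C'', hs'', hmc⟩ := ih hsep (by omega)
      exact ⟨C'', hs''.trans hs, hmc⟩


lemma mem_or_side {A B Φ Θ : Set V} (hΦ : IsMincutBetween G A B Φ)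
    (hsub : sideOf G A Φ ⊆ sideOf G A Θ) {u : V} (hu : u ∈ Φ) :
    u ∈ Θ ∨ u ∈ sideOf G A Θ := by
  by_cases huΘ : u ∈ Θ
  · exact Or.inl huΘ
  rcases mincut_boundary hΦ hu with hA | ⟨w, hadj, hw⟩
  · exact Or.inr (mem_sideOf_self hA huΘ)
  · exact Or.inr (sideOf_adj huΘ hadj (hsub hw))

/-- Order reversal: inclusion of `A`-sides reverses inclusion of `B`-sides. -/
lemma side_rev {A B Γ Δ : Set V} (hΓ : IsMincutBetween G A B Γ)
    (hΔ : IsMincutBetween G A B Δ)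
    (h : sideOf G A Γ ⊆ sideOf G A Δ) : sideOf G B Δ ⊆ sideOf G B Γ := by
  intro v hv
  obtain ⟨b, hb, hr⟩ := mem_sideOf.1 hv
  have hb' : b ∉ Γ := by
    intro hbΓ
    rcases mem_or_side hΓ h hbΓ with h1 | h2
    · exact hr.right h1
    · exact sideOf_disjoint_of_separates hΔ.1 h2 (mem_sideOf_self hb hr.right)
  have key : v ∈ sideOf G B Γ ∧ Reach G Δ b v := by
    refine hr.symm.ind (P := fun z => z ∈ sideOf G B Γ ∧ Reach G Δ b z)
      ⟨mem_sideOf_self hb hb', Reach.refl hr.right⟩ ?_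
    intro p q hp hpΔ hqΔ hadj
    have hrq : Reach G Δ b q := hp.2.trans (Reach.adj hpΔ hqΔ hadj)
    refine ⟨?_, hrq⟩
    by_cases hqΓ : q ∈ Γ
    · rcases mem_or_side hΓ h hqΓ with h1 | h2
      · exact absurd h1 hqΔ
      · obtain ⟨a, ha, hra⟩ := mem_sideOf.1 h2
        exact absurd (hra.symm.trans hrq.symm) (separates_iff.1 hΔ.1 a ha b hb)
    · exact sideOf_adj hqΓ hadj.symm hp.1
  exact key.1

/-- The join construction. -/
lemma join_aux [Fintype V] {A B Φ₁ Φ₂ : Set V}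
    (h₁ : IsMincutBetween G A B Φ₁) (h₂ : IsMincutBetween G A B Φ₂) :
    ∃ Ψ, IsMincutBetween G A B Ψ ∧ Ψ ⊆ Φ₁ ∪ Φ₂ ∧
      sideOf G A Φ₁ ⊆ sideOf G A Ψ ∧ sideOf G A Φ₂ ⊆ sideOf G A Ψ ∧
      ∀ Θ, IsMincutBetween G A B Θ → sideOf G A Φ₁ ⊆ sideOf G A Θ →
        sideOf G A Φ₂ ⊆ sideOf G A Θ → sideOf G A Ψ ⊆ sideOf G A Θ := by
  set F := Φ₁ ∪ Φ₂ with hF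
  have hFsep : Separates G A B F := separates_mono Set.subset_union_left h₁.1
  set RB := sideOf G B F with hRB
  set Ψ₀ : Set V := {u | u ∈ F ∧ (u ∈ B ∨ ∃ w, G.Adj u w ∧ w ∈ RB)} with hΨ₀
  have hΨ₀F : Ψ₀ ⊆ F := fun u hu => hu.1
  have hsep₀ : Separates G A B Ψ₀ := by
    rw [separates_iff]
    intro x hx y hy hr
    have hxRB : x ∈ RB := by
      have hyRB : y ∈ RB := by
        have hyF : y ∉ F := fun hyF => hr.right ⟨hyF, Or.inl hy⟩
        exact mem_sideOf_self hy hyF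
      refine hr.symm.ind (P := fun w => w ∈ RB) hyRB ?_
      intro p q hp hpΨ hqΨ hadj
      by_cases hqF : q ∈ F
      · exact absurd (⟨hqF, Or.inr ⟨p, hadj.symm, hp⟩⟩ : q ∈ Ψ₀) hqΨ
      · exact sideOf_adj hqF hadj.symm hp
    obtain ⟨b, hb, hrb⟩ := mem_sideOf.1 hxRB
    exact separates_iff.1 hFsep x hx b hb hrb
  obtain ⟨Ψ, hΨsub, hΨ⟩ := exists_mincut_subset hsep₀
  have hΨF : Ψ ⊆ F := hΨsub.trans hΨ₀F
  have hdisj : ∀ (Φ : Set V), Separates G A B Φ → Φ ⊆ F →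
      ∀ u ∈ sideOf G A Φ, u ∉ Ψ₀ := by
    intro Φ hΦsep hΦF u hu huΨ₀
    rcases huΨ₀.2 with huB | ⟨w, hadj, hw⟩
    · exact sideOf_disjoint_of_separates hΦsep hu (mem_sideOf_self huB (sideOf_not_mem hu))
    · have hwF : w ∉ F := sideOf_not_mem hw
      have hwΦ : w ∉ Φ := fun hm => hwF (hΦF hm)
      have hwside : w ∈ sideOf G A Φ := sideOf_adj hwΦ hadj.symm hu
      obtain ⟨b, hb, hrb⟩ := mem_sideOf.1 hw
      exact sideOf_disjoint_of_separates hΦsep hwside (mem_sideOf.2 ⟨b, hb, hrb.mono hΦF⟩)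
  have hupper : ∀ (Φ : Set V), Separates G A B Φ → Φ ⊆ F →
      sideOf G A Φ ⊆ sideOf G A Ψ := by
    intro Φ hΦsep hΦF v hv
    obtain ⟨a, ha, hr⟩ := mem_sideOf.1 hv
    have key : a ∈ sideOf G A Φ ∧ Reach G Ψ₀ v a := by
      refine hr.ind (P := fun w => w ∈ sideOf G A Φ ∧ Reach G Ψ₀ v w)
        ⟨hv, Reach.refl (hdisj Φ hΦsep hΦF v hv)⟩ ?_
      intro p q hp hpΦ hqΦ hadj
      have hqside : q ∈ sideOf G A Φ := sideOf_adj hqΦ hadj.symm hp.1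
      exact ⟨hqside, hp.2.trans
        (Reach.adj (hdisj Φ hΦsep hΦF p hp.1) (hdisj Φ hΦsep hΦF q hqside) hadj)⟩
    exact mem_sideOf.2 ⟨a, ha, key.2.mono hΨsub⟩
  refine ⟨Ψ, hΨ, hΨF, hupper Φ₁ h₁.1 Set.subset_union_left,
    hupper Φ₂ h₂.1 Set.subset_union_right, ?_⟩
  intro Θ hΘ hs₁ hs₂
  have hFΘ : ∀ u ∈ F, u ∈ Θ ∨ u ∈ sideOf G A Θ := by
    intro u hu
    rcases hu with hu | hu
    · exact mem_or_side h₁ hs₁ hu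
    · exact mem_or_side h₂ hs₂ hu
  have hdisjB : ∀ u ∈ sideOf G B Θ, u ∉ Ψ := by
    intro u hu huΨ
    rcases hFΘ u (hΨF huΨ) with h1 | h2
    · exact sideOf_not_mem hu h1
    · exact sideOf_disjoint_of_separates hΘ.1 h2 hu
  have hJ : ∀ t ∈ Θ, t ∉ Ψ → ∀ a' ∈ A, Reach G Ψ a' t → False := by
    intro t htΘ htΨ a' ha' hr
    rcases mincut_boundary (isMincutBetween_comm hΘ) htΘ with htB | ⟨w, hadj, hw⟩
    · exact separates_iff.1 hΨ.1 a' ha' t htB hr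
    · obtain ⟨b, hb, hrb⟩ := mem_sideOf.1 hw
      have hwΨ : w ∉ Ψ := hdisjB w hw
      have key : b ∈ sideOf G B Θ ∧ Reach G Ψ w b := by
        refine hrb.ind (P := fun z => z ∈ sideOf G B Θ ∧ Reach G Ψ w z)
          ⟨hw, Reach.refl hwΨ⟩ ?_
        intro p q hp hpΘ hqΘ hadj'
        have hqside : q ∈ sideOf G B Θ := sideOf_adj hqΘ hadj'.symm hp.1
        exact ⟨hqside, hp.2.trans (Reach.adj (hdisjB p hp.1) (hdisjB q hqside) hadj')⟩
      exact separates_iff.1 hΨ.1 a' ha' b hb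
        (hr.trans ((Reach.adj htΨ hwΨ hadj).trans key.2))
  intro v hv
  obtain ⟨a, ha, hr⟩ := mem_sideOf.1 hv
  have haΨ : a ∉ Ψ := hr.right
  have haΘ : a ∈ sideOf G A Θ := by
    by_cases haΘ' : a ∈ Θ
    · exact (hJ a haΘ' haΨ a ha (Reach.refl haΨ)).elim
    · exact mem_sideOf_self ha haΘ'
  have key : v ∈ sideOf G A Θ ∧ Reach G Ψ a v := by
    refine hr.symm.ind (P := fun w => w ∈ sideOf G A Θ ∧ Reach G Ψ a w)
      ⟨haΘ, Reach.refl haΨ⟩ ?_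
    intro p q hp hpΨ hqΨ hadj
    have hrq : Reach G Ψ a q := hp.2.trans (Reach.adj hpΨ hqΨ hadj)
    refine ⟨?_, hrq⟩
    by_cases hqΘ : q ∈ Θ
    · exact (hJ q hqΘ hqΨ a ha hrq).elim
    · exact sideOf_adj hqΘ hadj.symm hp.1
  exact key.1

end MincutLattice

open MincutLattice

/-- Lemma `lem:latticecut`. The relation `Φ₁ ≤ Φ₂ ↔ Φ₁^A ⊆ Φ₂^A` is a partial
order on `Mincut(A,B)` (reflexive, transitive, antisymmetric), and every pair of minimal cuts has
a join and a meet in `Mincut(A,B)`, both contained in `Φ₁ ∪ Φ₂`. -/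
theorem mincut_lattice {V : Type u} [Fintype V] (G : SimpleGraph V) (A B : Set V) :
    (∀ Φ ∈ Mincut G A B, sideOf G A Φ ⊆ sideOf G A Φ) ∧
    (∀ Φ₁ ∈ Mincut G A B, ∀ Φ₂ ∈ Mincut G A B, ∀ Φ₃ ∈ Mincut G A B,
      sideOf G A Φ₁ ⊆ sideOf G A Φ₂ → sideOf G A Φ₂ ⊆ sideOf G A Φ₃ →
        sideOf G A Φ₁ ⊆ sideOf G A Φ₃) ∧
    (∀ Φ₁ ∈ Mincut G A B, ∀ Φ₂ ∈ Mincut G A B,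
      sideOf G A Φ₁ ⊆ sideOf G A Φ₂ → sideOf G A Φ₂ ⊆ sideOf G A Φ₁ → Φ₁ = Φ₂) ∧
    (∀ Φ₁ ∈ Mincut G A B, ∀ Φ₂ ∈ Mincut G A B,
      ∃ Ψ ∈ Mincut G A B, Ψ ⊆ Φ₁ ∪ Φ₂ ∧
        sideOf G A Φ₁ ⊆ sideOf G A Ψ ∧ sideOf G A Φ₂ ⊆ sideOf G A Ψ ∧
        ∀ Θ ∈ Mincut G A B, sideOf G A Φ₁ ⊆ sideOf G A Θ →
          sideOf G A Φ₂ ⊆ sideOf G A Θ → sideOf G A Ψ ⊆ sideOf G A Θ) ∧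
    (∀ Φ₁ ∈ Mincut G A B, ∀ Φ₂ ∈ Mincut G A B,
      ∃ Ψ ∈ Mincut G A B, Ψ ⊆ Φ₁ ∪ Φ₂ ∧
        sideOf G A Ψ ⊆ sideOf G A Φ₁ ∧ sideOf G A Ψ ⊆ sideOf G A Φ₂ ∧
        ∀ Θ ∈ Mincut G A B, sideOf G A Θ ⊆ sideOf G A Φ₁ →
          sideOf G A Θ ⊆ sideOf G A Φ₂ → sideOf G A Θ ⊆ sideOf G A Ψ) := by
  refine ⟨fun Φ _ => subset_rfl,
    fun Φ₁ _ Φ₂ _ Φ₃ _ h12 h23 => h12.trans h23, ?_, ?_, ?_⟩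
  · intro Φ₁ h₁ Φ₂ h₂ h12 h21
    exact mincut_antisymm h₁ h₂ h12 h21
  · intro Φ₁ h₁ Φ₂ h₂
    obtain ⟨Ψ, hΨ, hsub, hu1, hu2, hleast⟩ := join_aux h₁ h₂
    exact ⟨Ψ, hΨ, hsub, hu1, hu2, fun Θ hΘ => hleast Θ hΘ⟩
  · intro Φ₁ h₁ Φ₂ h₂
    obtain ⟨Ψ, hΨ', hsub, hu1, hu2, hleast⟩ :=
      join_aux (isMincutBetween_comm h₁) (isMincutBetween_comm h₂)
    have hΨ : IsMincutBetween G A B Ψ := isMincutBetween_comm hΨ'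
    refine ⟨Ψ, hΨ, hsub, side_rev (isMincutBetween_comm h₁) hΨ' hu1,
      side_rev (isMincutBetween_comm h₂) hΨ' hu2, ?_⟩
    intro Θ hΘ ht1 ht2
    have hb1 : sideOf G B Φ₁ ⊆ sideOf G B Θ := side_rev hΘ h₁ ht1
    have hb2 : sideOf G B Φ₂ ⊆ sideOf G B Θ := side_rev hΘ h₂ ht2
    have := hleast Θ (isMincutBetween_comm hΘ) hb1 hb2
    exact side_rev hΨ' (isMincutBetween_comm hΘ) this
end

section
/- Let Λ be a finite simple graph and let A, B be sets of vertices. If Φ₁, Φ₂ ∈ Mincut_Λ(A,B) satisfy Φ₁ < Φ₂, and Φ ∈ Mincut_Λ(Φ₁, Φ₂), then Φ ∈ Mincut_Λ(A,B) and Φ₁ ≤ Φ ≤ Φ₂. -/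
universe u


open SimpleGraph

variable {V : Type u} {G : SimpleGraph V}

/-- Reachability via a walk all of whose vertices lie in `s`. -/
def RIn (G : SimpleGraph V) (s : Set V) (x y : V) : Prop :=
  ∃ w : G.Walk x y, ∀ v ∈ w.support, v ∈ s

lemma RIn.left_mem {s : Set V} {x y : V} (h : RIn G s x y) : x ∈ s := by
  obtain ⟨w, hw⟩ := h; exact hw x w.start_mem_support

lemma RIn.right_mem {s : Set V} {x y : V} (h : RIn G s x y) : y ∈ s := by
  obtain ⟨w, hw⟩ := h; exact hw y w.end_mem_support

lemma RIn.refl {s : Set V} {x : V} (hx : x ∈ s) : RIn G s x x :=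
  ⟨SimpleGraph.Walk.nil, by simpa using hx⟩

lemma RIn.symm {s : Set V} {x y : V} (h : RIn G s x y) : RIn G s y x := by
  obtain ⟨w, hw⟩ := h
  refine ⟨w.reverse, ?_⟩
  intro v hv
  rw [SimpleGraph.Walk.support_reverse] at hv
  exact hw v (List.mem_reverse.mp hv)

lemma RIn.trans {s : Set V} {x y z : V} (h : RIn G s x y) (h' : RIn G s y z) :
    RIn G s x z := by
  obtain ⟨w, hw⟩ := h; obtain ⟨w', hw'⟩ := h'
  refine ⟨w.append w', ?_⟩
  intro v hv
  rcases (SimpleGraph.Walk.mem_support_append_iff _ _).mp hv with h | h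
  · exact hw v h
  · exact hw' v h

lemma RIn.mono {s t : Set V} (hst : s ⊆ t) {x y : V} (h : RIn G s x y) : RIn G t x y := by
  obtain ⟨w, hw⟩ := h; exact ⟨w, fun v hv => hst (hw v hv)⟩

lemma rin_of_mem_support {s : Set V} {a b : V} (w : G.Walk a b)
    (hw : ∀ v ∈ w.support, v ∈ s) {x : V} (hx : x ∈ w.support) : RIn G s a x := by
  classical
  exact ⟨w.takeUntil x hx, fun v hv => hw v (w.support_takeUntil_subset hx hv)⟩

lemma rin_of_mem_support' {s : Set V} {a b : V} (w : G.Walk a b)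
    (hw : ∀ v ∈ w.support, v ∈ s) {x y : V} (hx : x ∈ w.support) (hy : y ∈ w.support) :
    RIn G s x y :=
  (rin_of_mem_support w hw hx).symm.trans (rin_of_mem_support w hw hy)

/-- The inclusion homomorphism from an induced subgraph. -/
def inclHom (G : SimpleGraph V) (s : Set V) : G.induce s →g G where
  toFun := Subtype.val
  map_rel' := fun h => h

lemma rin_to_induce {s : Set V} : ∀ {x y : V} (w : G.Walk x y),
    (∀ v ∈ w.support, v ∈ s) → ∀ (hx : x ∈ s) (hy : y ∈ s),
    (G.induce s).Reachable ⟨x, hx⟩ ⟨y, hy⟩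
  | x, _, SimpleGraph.Walk.nil, _, _, _ => SimpleGraph.Reachable.refl _
  | x, y, SimpleGraph.Walk.cons (v := c) ha w, hw, hx, hy => by
    have hc : c ∈ s := hw c (by simp)
    have hadj : (G.induce s).Adj ⟨x, hx⟩ ⟨c, hc⟩ := ha
    exact hadj.reachable.trans
      (rin_to_induce w (fun v hv => hw v (by simp [hv])) hc hy)

lemma reachable_induce_iff {s : Set V} {x y : V} (hx : x ∈ s) (hy : y ∈ s) :
    (G.induce s).Reachable ⟨x, hx⟩ ⟨y, hy⟩ ↔ RIn G s x y := by
  constructor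
  · rintro ⟨p⟩
    refine ⟨p.map (inclHom G s), ?_⟩
    intro v hv
    replace hv : v ∈ (p.map (inclHom G s)).support := hv
    rw [SimpleGraph.Walk.support_map, List.mem_map] at hv
    obtain ⟨u, _, rfl⟩ := hv
    exact u.2
  · rintro ⟨w, hw⟩
    exact rin_to_induce w hw hx hy

/-- Walk-based version of `Separates`. -/
def SepW (G : SimpleGraph V) (A B C : Set V) : Prop :=
  ∀ x, x ∈ A → x ∉ C → ∀ y, y ∈ B → y ∉ C → ¬ RIn G Cᶜ x y

/-- Walk-based version of `sideOf`. -/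
def Side (G : SimpleGraph V) (A C : Set V) : Set V :=
  {v | v ∉ C ∧ ∃ a, a ∈ A ∧ a ∉ C ∧ RIn G Cᶜ v a}

lemma separates_iff_sep {A B C : Set V} : Separates G A B C ↔ SepW G A B C := by
  constructor
  · intro h x hxA hxC y hyB hyC hr
    exact h x ⟨hxA, hxC⟩ y ⟨hyB, hyC⟩ ((reachable_induce_iff (s := Cᶜ) hxC hyC).mpr hr)
  · intro h x hx y hy hr
    exact h x hx.1 hx.2 y hy.1 hy.2 ((reachable_induce_iff (s := Cᶜ) hx.2 hy.2).mp hr)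

lemma sideOf_eq_side {A C : Set V} : sideOf G A C = Side G A C := by
  ext v
  constructor
  · rintro ⟨hv, a, ha, hr⟩
    exact ⟨hv, a, ha.1, ha.2, (reachable_induce_iff (s := Cᶜ) hv ha.2).mp hr⟩
  · rintro ⟨hv, a, haA, haC, hr⟩
    exact ⟨hv, a, ⟨haA, haC⟩, (reachable_induce_iff (s := Cᶜ) hv haC).mpr hr⟩

lemma side_subset_compl {A C : Set V} : Side G A C ⊆ Cᶜ := fun _ h => h.1

lemma mem_side_of_rin {A C : Set V} {v a : V} (haA : a ∈ A) (haC : a ∉ C)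
    (hr : RIn G Cᶜ v a) : v ∈ Side G A C :=
  ⟨hr.left_mem, a, haA, haC, hr⟩

lemma side_walk_mem {A C : Set V} {v : V} (hv : v ∈ Side G A C) :
    ∃ a, a ∈ A ∧ a ∉ C ∧ ∃ w : G.Walk v a, ∀ u ∈ w.support, u ∈ Side G A C := by
  obtain ⟨hvC, a, haA, haC, w, hw⟩ := hv
  refine ⟨a, haA, haC, w, ?_⟩
  intro u hu
  exact mem_side_of_rin haA haC ((rin_of_mem_support w hw hu).symm.trans ⟨w, hw⟩)

lemma sep_symm {A B C : Set V} (h : SepW G A B C) : SepW G B A C :=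
  fun x hxB hxC y hyA hyC hr => h y hyA hyC x hxB hxC hr.symm

lemma sep_disjoint_sides {A B C : Set V} (h : SepW G A B C) :
    ∀ v, v ∈ Side G A C → v ∈ Side G B C → False := by
  rintro v ⟨hvC, a, haA, haC, hra⟩ ⟨-, b, hbB, hbC, hrb⟩
  exact h a haA haC b hbB hbC (hra.symm.trans hrb)

/-- Boundary crossing: a walk from outside `P` to inside `P` has a first crossing edge. -/
lemma exists_boundary {P : Set V} : ∀ {a b : V} (w : G.Walk a b), a ∉ P → b ∈ P →
    ∃ p z, G.Adj p z ∧ z ∈ P ∧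
      (∃ w₁ : G.Walk a p, ∀ v ∈ w₁.support, v ∈ w.support ∧ v ∉ P) ∧
      (∃ w₂ : G.Walk z b, ∀ v ∈ w₂.support, v ∈ w.support.tail)
  | a, _, SimpleGraph.Walk.nil, ha, hb => absurd hb ha
  | a, b, SimpleGraph.Walk.cons (v := c) h w', ha, hb => by
    by_cases hc : c ∈ P
    · refine ⟨a, c, h, hc, ⟨SimpleGraph.Walk.nil, ?_⟩, ⟨w', ?_⟩⟩
      · intro v hv
        simp only [SimpleGraph.Walk.support_nil, List.mem_singleton] at hv
        subst hv
        exact ⟨by simp, ha⟩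
      · intro v hv
        simpa using hv
    · obtain ⟨p, z, hadj, hz, ⟨w₁, hw₁⟩, ⟨w₂, hw₂⟩⟩ := exists_boundary w' hc hb
      refine ⟨p, z, hadj, hz, ⟨SimpleGraph.Walk.cons h w₁, ?_⟩, ⟨w₂, ?_⟩⟩
      · intro v hv
        rw [SimpleGraph.Walk.support_cons, List.mem_cons] at hv
        rcases hv with rfl | hv
        · exact ⟨by simp, ha⟩
        · exact ⟨by simp [(hw₁ v hv).1], (hw₁ v hv).2⟩
      · intro v hv
        have := hw₂ v hv
        have h2 : v ∈ w'.support := List.mem_of_mem_tail this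
        simpa using h2

/-- Access lemma: from a vertex of a minimal cut one can reach `A` through the `A`-side. -/
lemma access {A B C : Set V} (hsep : SepW G A B C)
    (hmin : ∀ C' ⊆ C, C' ≠ C → ¬ SepW G A B C') {x : V} (hx : x ∈ C) :
    ∃ a, a ∈ A ∧ ∃ w : G.Walk a x, ∀ v ∈ w.support, v ∈ Side G A C ∨ v = x := by
  classical
  have hsub : C \ {x} ⊆ C := Set.diff_subset
  have hne : C \ {x} ≠ C := by
    intro h
    have : x ∈ C \ {x} := by rw [h]; exact hx
    simp at this
  have hns := hmin _ hsub hne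
  unfold SepW at hns
  push_neg at hns
  obtain ⟨a, haA, haC', b, hbB, hbC', w, hw⟩ := hns
  by_cases hxw : x ∈ w.support
  · by_cases hax : a = x
    · subst hax
      exact ⟨a, haA, SimpleGraph.Walk.nil, by simp⟩
    · have haC : a ∉ C := fun h => haC' ⟨h, hax⟩
      set U₁ := w.takeUntil x hxw with hU₁
      have hU₁sub : ∀ v ∈ U₁.support, v ∈ (C \ {x})ᶜ :=
        fun v hv => hw v (w.support_takeUntil_subset hxw hv)
      obtain ⟨p, z, hadj, hzx, ⟨w₁, hw₁⟩, -⟩ :=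
        exists_boundary (P := {x}) U₁ hax rfl
      have hzx' : z = x := hzx
      have hadj' : G.Adj p x := hzx' ▸ hadj
      refine ⟨a, haA, w₁.concat hadj', ?_⟩
      have hw₁C : ∀ v ∈ w₁.support, v ∉ C := by
        intro v hv
        have h1 := (hw₁ v hv).1
        have h2 : v ≠ x := (hw₁ v hv).2
        exact fun h => (hU₁sub v h1) ⟨h, h2⟩
      intro v hv
      rw [SimpleGraph.Walk.support_concat, List.mem_append] at hv
      rcases hv with hv | hv
      · left
        refine mem_side_of_rin haA haC ?_
        exact (rin_of_mem_support w₁ (fun u hu => hw₁C u hu) hv).symm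
      · right; simpa using hv
  · exfalso
    have haC : a ∉ C := by
      intro h
      have : a ≠ x := fun he => hxw (he ▸ w.start_mem_support)
      exact haC' ⟨h, this⟩
    have hbC : b ∉ C := by
      intro h
      have : b ≠ x := fun he => hxw (he ▸ w.end_mem_support)
      exact hbC' ⟨h, this⟩
    refine hsep a haA haC b hbB hbC ⟨w, ?_⟩
    intro v hv
    intro hvC
    have : v ≠ x := fun he => hxw (he ▸ hv)
    exact (hw v hv) ⟨hvC, this⟩

section Main

variable {A B Φ₁ Φ₂ Φ : Set V}

/-- No vertex of `Φ₁` lies in the `B`-side of `Φ₂`. -/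
lemma phi1_disj_sideB (hsep1 : SepW G A B Φ₁)
    (hmin1 : ∀ C' ⊆ Φ₁, C' ≠ Φ₁ → ¬ SepW G A B C')
    (hsep2 : SepW G A B Φ₂) (hS : Side G A Φ₁ ⊆ Side G A Φ₂) :
    ∀ φ, φ ∈ Φ₁ → φ ∉ Side G B Φ₂ := by
  intro φ hφ1 hφT
  obtain ⟨hφ2, b, hbB, hb2, hrb⟩ := hφT
  obtain ⟨a, haA, w, hw⟩ := access hsep1 hmin1 hφ1
  have ha2 : ∀ v ∈ w.support, v ∈ Φ₂ᶜ := by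
    intro v hv
    rcases hw v hv with h | rfl
    · exact (hS h).1
    · exact hφ2
  have haw : RIn G Φ₂ᶜ a φ := ⟨w, ha2⟩
  exact hsep2 a haA haw.left_mem b hbB hb2 (haw.trans hrb)

/-- The `B`-side of `Φ₂` is contained in the `B`-side of `Φ₁`. -/
lemma sideB_anti (hsep1 : SepW G A B Φ₁)
    (hmin1 : ∀ C' ⊆ Φ₁, C' ≠ Φ₁ → ¬ SepW G A B C')
    (hsep2 : SepW G A B Φ₂) (hS : Side G A Φ₁ ⊆ Side G A Φ₂) :
    Side G B Φ₂ ⊆ Side G B Φ₁ := by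
  intro v hv
  obtain ⟨b, hbB, hb2, w, hw⟩ := side_walk_mem hv
  have h1 : ∀ u ∈ w.support, u ∈ Φ₁ᶜ := fun u hu hc =>
    phi1_disj_sideB hsep1 hmin1 hsep2 hS u hc (hw u hu)
  exact mem_side_of_rin hbB (h1 b w.end_mem_support) ⟨w, h1⟩

/-- Claim B: `Φ` avoids the `A`-side of `Φ₁`. -/
lemma sideA_disj_phi (hS : Side G A Φ₁ ⊆ Side G A Φ₂)
    (hsepΦ : SepW G Φ₁ Φ₂ Φ)
    (hminΦ : ∀ C' ⊆ Φ, C' ≠ Φ → ¬ SepW G Φ₁ Φ₂ C') :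
    ∀ φ, φ ∈ Side G A Φ₁ → φ ∉ Φ := by
  classical
  intro φ hφS hφΦ
  have hφ1 : φ ∉ Φ₁ := hφS.1
  have hφ2 : φ ∉ Φ₂ := (hS hφS).1
  have hsub : Φ \ {φ} ⊆ Φ := Set.diff_subset
  have hne : Φ \ {φ} ≠ Φ := by
    intro h
    have : φ ∈ Φ \ {φ} := by rw [h]; exact hφΦ
    simp at this
  have hns := hminΦ _ hsub hne
  unfold SepW at hns
  push_neg at hns
  obtain ⟨x, hx1, hx', y, hy2, hy', W, hW⟩ := hns
  have hxφ : x ≠ φ := fun h => hφ1 (h ▸ hx1)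
  have hyφ : y ≠ φ := fun h => hφ2 (h ▸ hy2)
  have hxΦ : x ∉ Φ := fun h => hx' ⟨h, hxφ⟩
  have hyΦ : y ∉ Φ := fun h => hy' ⟨h, hyφ⟩
  by_cases hφW : φ ∈ W.support
  case neg =>
    refine hsepΦ x hx1 hxΦ y hy2 hyΦ ⟨W, ?_⟩
    intro v hv hvΦ
    exact (hW v hv) ⟨hvΦ, fun he => hφW (he ▸ hv)⟩
  case pos =>
    have hφWr : φ ∈ W.reverse.support := by
      rw [SimpleGraph.Walk.support_reverse]; exact List.mem_reverse.mpr hφW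
    set T := W.reverse.takeUntil φ hφWr with hT
    have hcount : T.support.count φ = 1 :=
      W.reverse.count_support_takeUntil_eq_one hφWr
    set W₂ := T.reverse with hW₂def
    have hW₂supp : W₂.support = T.support.reverse := SimpleGraph.Walk.support_reverse T
    have hsubW : ∀ v ∈ W₂.support, v ∈ W.support := by
      intro v hv
      rw [hW₂supp, List.mem_reverse] at hv
      have := W.reverse.support_takeUntil_subset hφWr hv
      rw [SimpleGraph.Walk.support_reverse, List.mem_reverse] at this
      exact this
    have hφtail : φ ∉ W₂.support.tail := by
      have hcons : W₂.support = φ :: W₂.support.tail := W₂.support_eq_cons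
      have hc2 : W₂.support.count φ = 1 := by
        rw [hW₂supp, List.count_reverse]; exact hcount
      rw [hcons] at hc2
      simp only [List.count_cons_self] at hc2
      have : W₂.support.tail.count φ = 0 := by omega
      exact List.count_eq_zero.mp this
    have hyNot : y ∈ (Side G A Φ₁)ᶜ := fun h => (hS h).1 hy2
    obtain ⟨p, z, hadj, hzP, ⟨w₁, hw₁⟩, ⟨w₂, hw₂⟩⟩ :=
      exists_boundary (P := (Side G A Φ₁)ᶜ) W₂ (fun h => h hφS) hyNot
    have hpS : p ∈ Side G A Φ₁ := not_not.mp (hw₁ p w₁.end_mem_support).2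
    have hz1 : z ∈ Φ₁ := by
      by_contra hz1
      obtain ⟨hp1, a, haA, ha1, hrpa⟩ := hpS
      have hzp : RIn G Φ₁ᶜ z p := ⟨hadj.symm.toWalk, by
        intro v hv
        simp only [SimpleGraph.Walk.support_cons, SimpleGraph.Walk.support_nil,
          List.mem_cons, List.mem_singleton] at hv
        rcases hv with rfl | rfl | h
        · exact hz1
        · exact hp1
        · exact absurd h (by simp)⟩
      exact hzP (mem_side_of_rin haA ha1 (hzp.trans hrpa))
    have hzφ : z ≠ φ := fun h => hφ1 (h ▸ hz1)
    have hztail : z ∈ W₂.support.tail := hw₂ z w₂.start_mem_support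
    have hzΦ : z ∉ Φ := by
      intro h
      exact (hW z (hsubW z (List.mem_of_mem_tail hztail))) ⟨h, hzφ⟩
    have hrzy : RIn G Φᶜ z y := by
      refine ⟨w₂, ?_⟩
      intro v hv hvΦ
      have hvtail := hw₂ v hv
      have hvφ : v ≠ φ := fun he => hφtail (he ▸ hvtail)
      exact (hW v (hsubW v (List.mem_of_mem_tail hvtail))) ⟨hvΦ, hvφ⟩
    exact hsepΦ z hz1 hzΦ y hy2 hyΦ hrzy

end Main


/-- Lemma `lem:squeez`. If `Φ₁ < Φ₂` in `Mincut(A,B)` and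
`Φ ∈ Mincut(Φ₁,Φ₂)`, then `Φ ∈ Mincut(A,B)` and `Φ₁ ≤ Φ ≤ Φ₂`. -/
theorem mincut_squeeze {V : Type u} [Fintype V] (G : SimpleGraph V)
    (A B Φ₁ Φ₂ Φ : Set V) (h₁ : Φ₁ ∈ Mincut G A B) (h₂ : Φ₂ ∈ Mincut G A B)
    (hle : sideOf G A Φ₁ ⊆ sideOf G A Φ₂) (hne : Φ₁ ≠ Φ₂)
    (hΦ : Φ ∈ Mincut G Φ₁ Φ₂) :
    Φ ∈ Mincut G A B ∧ sideOf G A Φ₁ ⊆ sideOf G A Φ ∧ sideOf G A Φ ⊆ sideOf G A Φ₂ := by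
  classical
  obtain ⟨hsep1, hmin1⟩ := h₁
  obtain ⟨hsep2, hmin2⟩ := h₂
  obtain ⟨hsepΦ, hminΦ⟩ := hΦ
  rw [separates_iff_sep] at hsep1 hsep2 hsepΦ
  replace hmin1 : ∀ C' ⊆ Φ₁, C' ≠ Φ₁ → ¬ SepW G A B C' :=
    fun C' hs hn hsep => hmin1 C' hs hn (separates_iff_sep.mpr hsep)
  replace hmin2 : ∀ C' ⊆ Φ₂, C' ≠ Φ₂ → ¬ SepW G A B C' :=
    fun C' hs hn hsep => hmin2 C' hs hn (separates_iff_sep.mpr hsep)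
  replace hminΦ : ∀ C' ⊆ Φ, C' ≠ Φ → ¬ SepW G Φ₁ Φ₂ C' :=
    fun C' hs hn hsep => hminΦ C' hs hn (separates_iff_sep.mpr hsep)
  rw [sideOf_eq_side, sideOf_eq_side] at hle
  -- basic consequences
  have hTsub : Side G B Φ₂ ⊆ Side G B Φ₁ := sideB_anti hsep1 hmin1 hsep2 hle
  have hd1 : ∀ φ, φ ∈ Side G A Φ₁ → φ ∉ Φ := sideA_disj_phi hle hsepΦ hminΦ
  have hminΦ' : ∀ C' ⊆ Φ, C' ≠ Φ → ¬ SepW G Φ₂ Φ₁ C' :=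
    fun C' hs hn h => hminΦ C' hs hn (sep_symm h)
  have hd2 : ∀ φ, φ ∈ Side G B Φ₂ → φ ∉ Φ :=
    sideA_disj_phi (A := B) (Φ₁ := Φ₂) (Φ₂ := Φ₁) hTsub (sep_symm hsepΦ) hminΦ'
  -- Φ separates A from B
  have hsepΦAB : SepW G A B Φ := by
    intro a haA haΦ b hbB hbΦ hr
    obtain ⟨u, hu⟩ := hr
    by_cases h1 : ∃ v ∈ u.support, v ∈ Φ₁
    · by_cases h2 : ∃ v ∈ u.support, v ∈ Φ₂
      · obtain ⟨x, hxs, hx1⟩ := h1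
        obtain ⟨y, hys, hy2⟩ := h2
        exact hsepΦ x hx1 (hu x hxs) y hy2 (hu y hys) (rin_of_mem_support' u hu hxs hys)
      · push_neg at h2
        exact hsep2 a haA (h2 a u.start_mem_support) b hbB (h2 b u.end_mem_support)
          ⟨u, fun v hv => h2 v hv⟩
    · push_neg at h1
      exact hsep1 a haA (h1 a u.start_mem_support) b hbB (h1 b u.end_mem_support)
        ⟨u, fun v hv => h1 v hv⟩
  -- Φ is a minimal cut between A and B
  have hminΦAB : ∀ C' ⊆ Φ, C' ≠ Φ → ¬ SepW G A B C' := by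
    intro C' hsub hneq hsepC'
    have hns := hminΦ C' hsub hneq
    unfold SepW at hns
    push_neg at hns
    obtain ⟨x, hx1, hx', y, hy2, hy', W, hW⟩ := hns
    obtain ⟨a, haA, wa, hwa⟩ := access hsep1 hmin1 hx1
    have hmin2B : ∀ C'' ⊆ Φ₂, C'' ≠ Φ₂ → ¬ SepW G B A C'' :=
      fun C'' hs hn h => hmin2 C'' hs hn (sep_symm h)
    obtain ⟨b, hbB, wb, hwb⟩ := access (sep_symm hsep2) hmin2B hy2
    have hwaC : ∀ v ∈ wa.support, v ∉ C' := by
      intro v hv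
      rcases hwa v hv with h | rfl
      · exact fun hc => hd1 v h (hsub hc)
      · exact hx'
    have hwbC : ∀ v ∈ wb.support, v ∉ C' := by
      intro v hv
      rcases hwb v hv with h | rfl
      · exact fun hc => hd2 v h (hsub hc)
      · exact hy'
    refine hsepC' a haA (hwaC a wa.start_mem_support) b hbB (hwbC b wb.start_mem_support)
      ⟨(wa.append W).append wb.reverse, ?_⟩
    intro v hv
    rw [SimpleGraph.Walk.mem_support_append_iff] at hv
    rcases hv with hv | hv
    · rw [SimpleGraph.Walk.mem_support_append_iff] at hv
      rcases hv with hv | hv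
      · exact hwaC v hv
      · exact hW v hv
    · rw [SimpleGraph.Walk.support_reverse, List.mem_reverse] at hv
      exact hwbC v hv
  -- side inclusions
  have hS1Φ : Side G A Φ₁ ⊆ Side G A Φ := by
    intro v hv
    obtain ⟨a, haA, ha1, w, hw⟩ := side_walk_mem hv
    exact mem_side_of_rin haA (hd1 a (hw a w.end_mem_support))
      ⟨w, fun u hu => hd1 u (hw u hu)⟩
  have hSΦ2 : Side G A Φ ⊆ Side G A Φ₂ := by
    intro v hv
    obtain ⟨hvΦ, a, haA, haΦ, u, hu⟩ := hv
    by_cases h2 : ∃ x ∈ u.support, x ∈ Φ₂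
    · by_cases h1 : ∃ x ∈ u.support, x ∈ Φ₁
      · obtain ⟨y, hys, hy2⟩ := h2
        obtain ⟨x, hxs, hx1⟩ := h1
        exact absurd (rin_of_mem_support' u hu hxs hys)
          (hsepΦ x hx1 (hu x hxs) y hy2 (hu y hys))
      · push_neg at h1
        exact hle (mem_side_of_rin haA (h1 a u.end_mem_support) ⟨u, fun w hw => h1 w hw⟩)
    · push_neg at h2
      exact mem_side_of_rin haA (h2 a u.end_mem_support) ⟨u, fun w hw => h2 w hw⟩
  refine ⟨⟨separates_iff_sep.mpr hsepΦAB,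
    fun C' hs hn hsepC' => hminΦAB C' hs hn (separates_iff_sep.mp hsepC')⟩, ?_, ?_⟩
  · rw [sideOf_eq_side, sideOf_eq_side]
    exact hS1Φ
  · rw [sideOf_eq_side, sideOf_eq_side]
    exact hSΦ2
end

section
/- Let Λ be a finite simple graph and let A, B be sets of vertices. If Φ₁, Φ₂, Φ₃ ∈ Mincut_Λ(A,B) satisfy Φ₁ < Φ₂ < Φ₃, then Φ₂ separates Φ₁ from Φ₃. -/
universe u

section Aux

variable {V : Type u} {G : SimpleGraph V}

open SimpleGraph

/-- A walk whose support lies in `S` yields reachability in the induced graph on `S`. -/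
lemma reach_induce_of_walk {S : Set V} :
    ∀ {u v : V} (p : G.Walk u v) (h : ∀ w ∈ p.support, w ∈ S),
    (G.induce S).Reachable ⟨u, h u p.start_mem_support⟩ ⟨v, h v p.end_mem_support⟩
  | _, _, SimpleGraph.Walk.nil, _ => SimpleGraph.Reachable.refl _
  | u, v, SimpleGraph.Walk.cons ha q, h => by
      have h' : ∀ w ∈ q.support, w ∈ S := fun w hw => h w (by simp [hw])
      have hadj : (G.induce S).Adj ⟨u, h u (SimpleGraph.Walk.cons ha q).start_mem_support⟩
          ⟨_, h' _ q.start_mem_support⟩ := ha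
      exact hadj.reachable.trans (reach_induce_of_walk q h')

/-- Reachability in the induced graph on `S` yields a walk with support in `S`. -/
lemma walk_of_reach_induce {S : Set V} {u v : V} {hu : u ∈ S} {hv : v ∈ S}
    (h : (G.induce S).Reachable ⟨u, hu⟩ ⟨v, hv⟩) :
    ∃ p : G.Walk u v, ∀ w ∈ p.support, w ∈ S := by
  obtain ⟨q⟩ := h
  let f : G.induce S →g G := ⟨Subtype.val, fun h => h⟩
  refine ⟨q.map f, ?_⟩
  intro w hw
  rw [SimpleGraph.Walk.support_map, List.mem_map] at hw
  obtain ⟨⟨w', hw'⟩, _, rfl⟩ := hw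
  exact hw'

lemma mem_sideOf_of_walk {A C : Set V} {v x : V} (hv : v ∉ C) (hx : x ∈ A \ C)
    (p : G.Walk v x) (hp : ∀ w ∈ p.support, w ∉ C) : v ∈ sideOf G A C := by
  refine ⟨hv, x, hx, ?_⟩
  exact reach_induce_of_walk (S := Cᶜ) p hp

lemma support_subset_sideOf {A C : Set V} {u x : V} (hx : x ∈ A \ C)
    (p : G.Walk u x) (hp : ∀ w ∈ p.support, w ∉ C) :
    ∀ w ∈ p.support, w ∈ sideOf G A C := by
  classical
  intro w hw
  refine mem_sideOf_of_walk (hp w hw) hx (p.dropUntil w hw) ?_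
  exact fun z hz => hp z (p.support_dropUntil_subset hw hz)

lemma not_mem_of_mem_sideOf {T C : Set V} {w : V} (h : w ∈ sideOf G T C) : w ∉ C := by
  obtain ⟨h1, -⟩ := h; exact h1

lemma sideOf_disjoint {A B C : Set V} (hsep : Separates G A B C) {w : V}
    (hA : w ∈ sideOf G A C) (hB : w ∈ sideOf G B C) : False := by
  obtain ⟨hw, a, ha, ra⟩ := hA
  obtain ⟨hw', b, hb, rb⟩ := hB
  exact hsep a ha b hb (ra.symm.trans rb)

/-- Peel the endpoint `v` off a walk ending at `v` in which `v` occurs exactly once and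
every support vertex in `C` equals `v`. -/
lemma peel [DecidableEq V] {C : Set V} {x v : V} (p : G.Walk x v)
    (hcount : p.support.count v = 1)
    (hC : ∀ w ∈ p.support, w ∈ C → w = v) :
    x = v ∨ ∃ u, G.Adj v u ∧ ∃ q : G.Walk u x, ∀ w ∈ q.support, w ∉ C := by
  have hcount' : p.reverse.support.count v = 1 := by
    rw [SimpleGraph.Walk.support_reverse, List.count_reverse]; exact hcount
  cases hr : p.reverse with
  | nil =>
    left
    have hlen : p.length = 0 := by
      rw [← SimpleGraph.Walk.length_reverse, hr, SimpleGraph.Walk.length_nil]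
    cases p with
    | nil => rfl
    | cons _ _ => simp at hlen
  | @cons _ u _ ha q =>
    right
    refine ⟨u, ha, q, ?_⟩
    have hvq : v ∉ q.support := by
      rw [hr] at hcount'
      simp only [SimpleGraph.Walk.support_cons, List.count_cons_self] at hcount'
      exact fun hmem => by
        have := List.count_pos_iff.mpr hmem
        omega
    intro w hw hwC
    have hwp : w ∈ p.support := by
      have : w ∈ p.reverse.support := by rw [hr]; simp [hw]
      rwa [SimpleGraph.Walk.support_reverse, List.mem_reverse] at this
    exact hvq (hC w hwp hwC ▸ hw)

/-- Every vertex of a minimal cut is attached to both the `A`-side and the `B`-side. -/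
lemma attach {A B C : Set V} (h : IsMincutBetween G A B C) {v : V} (hv : v ∈ C) :
    ((v ∈ A) ∨ ∃ u, G.Adj v u ∧ ∃ x, x ∈ A ∧ ∃ p : G.Walk u x, ∀ w ∈ p.support, w ∉ C) ∧
    ((v ∈ B) ∨ ∃ u, G.Adj v u ∧ ∃ y, y ∈ B ∧ ∃ p : G.Walk u y, ∀ w ∈ p.support, w ∉ C) := by
  classical
  have hne : C \ {v} ≠ C := by
    intro he
    have : v ∈ C \ {v} := by rw [he]; exact hv
    simp at this
  have hnsep : ¬ Separates G A B (C \ {v}) := h.2 _ Set.diff_subset hne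
  simp only [Separates, not_forall, not_not] at hnsep
  obtain ⟨x, hx, y, hy, hr⟩ := hnsep
  obtain ⟨p, hp⟩ := walk_of_reach_induce hr
  have hp' : ∀ w ∈ p.support, w ∈ C → w = v := by
    intro w hw hwC
    have := hp w hw
    simp only [Set.mem_compl_iff, Set.mem_diff, Set.mem_singleton_iff, not_and, not_not] at this
    exact this hwC
  by_cases hvp : v ∈ p.support
  · constructor
    · -- A side: takeUntil v
      have hq := peel (p.takeUntil v hvp) (p.count_support_takeUntil_eq_one hvp)
        (fun w hw => hp' w (p.support_takeUntil_subset hvp hw))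
      rcases hq with he | ⟨u, ha, q, hq⟩
      · exact Or.inl (he ▸ hx.1)
      · exact Or.inr ⟨u, ha, x, hx.1, q, hq⟩
    · -- B side: takeUntil v on the reverse
      have hvp' : v ∈ p.reverse.support := by
        rwa [SimpleGraph.Walk.support_reverse, List.mem_reverse]
      have hq := peel (p.reverse.takeUntil v hvp')
        (p.reverse.count_support_takeUntil_eq_one hvp')
        (fun w hw => hp' w (by
          have := p.reverse.support_takeUntil_subset hvp' hw
          rwa [SimpleGraph.Walk.support_reverse, List.mem_reverse] at this))
      rcases hq with he | ⟨u, ha, q, hq⟩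
      · exact Or.inl (he ▸ hy.1)
      · exact Or.inr ⟨u, ha, y, hy.1, q, hq⟩
  · -- v not on the walk: contradiction with C separating
    exfalso
    have hpc : ∀ w ∈ p.support, w ∉ C := by
      intro w hw hwC
      exact hvp (hp' w hw hwC ▸ hw)
    have hx' : x ∈ A \ C := ⟨hx.1, hpc x p.start_mem_support⟩
    have hy' : y ∈ B \ C := ⟨hy.1, hpc y p.end_mem_support⟩
    exact h.1 x hx' y hy' (reach_induce_of_walk (S := Cᶜ) p hpc)

/-- The main step: a vertex of a mincut `C` that is not in `C'` lies in the `T`-side of `C'`,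
provided the `T`-side of `C` avoids `C'`. -/
lemma side_step {T C C' : Set V} {v : V} (hv' : v ∉ C')
    (hdisj : ∀ w ∈ sideOf G T C, w ∉ C')
    (hatt : (v ∈ T) ∨ ∃ u, G.Adj v u ∧ ∃ x, x ∈ T ∧ ∃ p : G.Walk u x, ∀ w ∈ p.support, w ∉ C) :
    v ∈ sideOf G T C' := by
  rcases hatt with hvT | ⟨u, ha, x, hxT, p, hp⟩
  · exact ⟨hv', v, ⟨hvT, hv'⟩, SimpleGraph.Reachable.refl _⟩
  · have hx : x ∈ T \ C := ⟨hxT, hp x p.end_mem_support⟩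
    have hside : ∀ w ∈ p.support, w ∈ sideOf G T C := support_subset_sideOf hx p hp
    have hp' : ∀ w ∈ (SimpleGraph.Walk.cons ha p).support, w ∉ C' := by
      intro w hw
      rw [SimpleGraph.Walk.support_cons, List.mem_cons] at hw
      rcases hw with rfl | hw
      · exact hv'
      · exact hdisj w (hside w hw)
    exact mem_sideOf_of_walk hv' ⟨hxT, hdisj x (hside x p.end_mem_support)⟩
      (SimpleGraph.Walk.cons ha p) hp'

end Aux

/-- Lemma `lem:separate`. If `Φ₁ < Φ₂ < Φ₃` in `Mincut(A,B)`,
then `Φ₂` separates `Φ₁` from `Φ₃`. -/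
theorem mincut_separate {V : Type u} [Fintype V] (G : SimpleGraph V)
    (A B Φ₁ Φ₂ Φ₃ : Set V)
    (h₁ : Φ₁ ∈ Mincut G A B) (h₂ : Φ₂ ∈ Mincut G A B) (h₃ : Φ₃ ∈ Mincut G A B)
    (h12 : sideOf G A Φ₁ ⊆ sideOf G A Φ₂) (hne12 : Φ₁ ≠ Φ₂)
    (h23 : sideOf G A Φ₂ ⊆ sideOf G A Φ₃) (hne23 : Φ₂ ≠ Φ₃) :
    Separates G Φ₁ Φ₃ Φ₂ := by
  classical
  intro x hx y hy r
  -- `x ∈ Φ₁ \ Φ₂` lies in the `A`-side of `Φ₂`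
  have hxA : x ∈ sideOf G A Φ₂ :=
    side_step hx.2 (fun w hw => not_mem_of_mem_sideOf (h12 hw)) (attach h₁ hx.1).1
  -- vertices of `Φ₂` off `Φ₃` lie in the `A`-side of `Φ₃`
  have hdisj3 : ∀ w ∈ sideOf G B Φ₃, w ∉ Φ₂ := by
    intro w hw hw2
    have hw3 : w ∉ Φ₃ := not_mem_of_mem_sideOf hw
    have hwA : w ∈ sideOf G A Φ₃ :=
      side_step hw3 (fun z hz => not_mem_of_mem_sideOf (h23 hz)) (attach h₂ hw2).1
    exact sideOf_disjoint h₃.1 hwA hw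
  -- `y ∈ Φ₃ \ Φ₂` lies in the `B`-side of `Φ₂`
  have hyB : y ∈ sideOf G B Φ₂ := side_step hy.2 hdisj3 (attach h₃ hy.1).2
  -- but reachability from `x` puts `y` in the `A`-side of `Φ₂`, contradiction
  obtain ⟨hx2, a, ha, ra⟩ := hxA
  have hyA : y ∈ sideOf G A Φ₂ := ⟨hy.2, a, ha, r.symm.trans ra⟩
  exact sideOf_disjoint h₂.1 hyA hyB
end

section
/- Let Λ be a finite connected simple graph and let X be a nonempty finite set of vertices of Λ. Then there exists x ∈ X such that all vertices of X∖{x} lie in a single connected component of the induced subgraph of Λ on the complement of {x}. Moreover, if |X| > 1 and x₀ ∈ X is given, then such an x can be chosen with x ≠ x₀. -/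
universe u

lemma walk_avoid_reachable {V : Type u} (G : SimpleGraph V) (x : V) :
    ∀ {a b : V} (w : G.Walk a b) (_ : x ∉ w.support) (ha : a ∈ ({x} : Set V)ᶜ)
      (hb : b ∈ ({x} : Set V)ᶜ),
      (G.induce ({x} : Set V)ᶜ).Reachable ⟨a, ha⟩ ⟨b, hb⟩ := by
  intro a b w
  induction w with
  | nil => intro _ ha hb; exact SimpleGraph.Reachable.refl _
  | @cons u c d h p ih =>
      intro hs ha hb
      rw [SimpleGraph.Walk.support_cons, List.mem_cons] at hs
      push_neg at hs
      have hc : c ∈ ({x} : Set V)ᶜ := fun hmem =>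
        hs.2 (Set.mem_singleton_iff.mp hmem ▸ SimpleGraph.Walk.start_mem_support p)
      have hadj : (G.induce ({x} : Set V)ᶜ).Adj ⟨u, ha⟩ ⟨c, hc⟩ := h
      exact hadj.reachable.trans (ih hs.2 hc hb)

lemma key_lemma {V : Type u} [Fintype V] (G : SimpleGraph V) (hconn : G.Connected)
    (X : Set V) {x₀ x : V} (hx : x ∈ X) (hne : x ≠ x₀)
    (hmax : ∀ y ∈ X, y ≠ x → G.dist x₀ y ≤ G.dist x₀ x) :
    ∀ y (hy : y ∈ X \ {x}) z (hz : z ∈ X \ {x}),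
      (G.induce ({x} : Set V)ᶜ).Reachable ⟨y, hy.2⟩ ⟨z, hz.2⟩ := by
  have hx₀ : x₀ ∈ ({x} : Set V)ᶜ := fun hmem => hne (Set.mem_singleton_iff.mp hmem).symm
  classical
  have main : ∀ y (hy : y ∈ X \ {x}),
      (G.induce ({x} : Set V)ᶜ).Reachable ⟨y, hy.2⟩ ⟨x₀, hx₀⟩ := by
    intro y hy
    obtain ⟨p, hp⟩ := hconn.exists_walk_length_eq_dist x₀ y
    have hxp : x ∉ p.support := by
      intro hmem
      have h1 : G.dist x₀ x ≤ (p.takeUntil x hmem).length := SimpleGraph.dist_le _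
      have h2 : G.dist x y ≤ (p.dropUntil x hmem).length := SimpleGraph.dist_le _
      have hsum : (p.takeUntil x hmem).length + (p.dropUntil x hmem).length = p.length := by
        have := congr_arg SimpleGraph.Walk.length (p.take_spec hmem)
        rwa [SimpleGraph.Walk.length_append] at this
      have hpos : 0 < G.dist x y :=
        hconn.pos_dist_of_ne (fun h => (Set.mem_singleton_iff.not.mp hy.2) h.symm)
      have := hmax y hy.1 (Set.mem_singleton_iff.not.mp hy.2)
      omega
    exact (walk_avoid_reachable G x p hxp hx₀ hy.2).symm
  intro y hy z hz
  exact (main y hy).trans (main z hz).symm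

/-- Lemma `lem:graph`. In a finite connected graph, any nonempty finite set
`X` of vertices has an element `x` such that `X ∖ {x}` lies in a single connected component of
`Λ ∖ {x}`; moreover, if `|X| > 1` and `x₀ ∈ X` is given, such an `x` can be chosen with
`x ≠ x₀`. -/
theorem exists_noncut_vertex {V : Type u} [Fintype V] (G : SimpleGraph V)
    (hconn : G.Connected) (X : Set V) (hX : X.Nonempty) :
    (∃ x ∈ X, ∀ y (hy : y ∈ X \ {x}) z (hz : z ∈ X \ {x}),
        (G.induce ({x} : Set V)ᶜ).Reachable ⟨y, hy.2⟩ ⟨z, hz.2⟩) ∧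
    (∀ x₀ ∈ X, 1 < X.ncard →
      ∃ x ∈ X, x ≠ x₀ ∧ ∀ y (hy : y ∈ X \ {x}) z (hz : z ∈ X \ {x}),
        (G.induce ({x} : Set V)ᶜ).Reachable ⟨y, hy.2⟩ ⟨z, hz.2⟩) := by
  have hXfin : X.Finite := Set.toFinite X
  have part2 : ∀ x₀ ∈ X, 1 < X.ncard →
      ∃ x ∈ X, x ≠ x₀ ∧ ∀ y (hy : y ∈ X \ {x}) z (hz : z ∈ X \ {x}),
        (G.induce ({x} : Set V)ᶜ).Reachable ⟨y, hy.2⟩ ⟨z, hz.2⟩ := by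
    intro x₀ hx₀ hcard
    have hne : (X \ {x₀}).Nonempty := by
      by_contra h
      rw [Set.not_nonempty_iff_eq_empty, Set.diff_eq_empty] at h
      have := Set.ncard_le_ncard h (Set.finite_singleton x₀)
      rw [Set.ncard_singleton] at this
      omega
    obtain ⟨x, hxmem, hxmax⟩ := Set.exists_max_image (X \ {x₀}) (G.dist x₀)
      hXfin.diff hne
    have hxX : x ∈ X := hxmem.1
    have hxne : x ≠ x₀ := Set.mem_singleton_iff.not.mp hxmem.2
    refine ⟨x, hxX, hxne, key_lemma G hconn X hxX hxne ?_⟩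
    intro y hy hyx
    by_cases hy0 : y = x₀
    · subst hy0; simp [SimpleGraph.dist_self]
    · exact hxmax y ⟨hy, hy0⟩
  refine ⟨?_, part2⟩
  by_cases hcard : 1 < X.ncard
  · obtain ⟨x₀, hx₀⟩ := hX
    obtain ⟨x, hx, _, h⟩ := part2 x₀ hx₀ hcard
    exact ⟨x, hx, h⟩
  · obtain ⟨x, hx⟩ := hX
    refine ⟨x, hx, ?_⟩
    intro y hy
    exfalso
    push_neg at hcard
    rw [Set.ncard_le_one_iff hXfin] at hcard
    exact hy.2 (hcard hy.1 hx)
end
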